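/- There exist universal constants C ≥ c > 0 such that for all a, q ∈ [0,∞) and all integers n ≥ 2 the following holds. If a ∈ [0,1], then c^{1+q}·n^{1-a}·(1+q)^{1+q}·(ln n)^{1+q}/((1-a)·ln n + 1 + q)^{1+q} ≤ ∑_{i=1}^{n} i^{-a}·(ln(n/i))^{q} ≤ C^{1+q}·n^{1-a}·(1+q)^{1+q}·(ln n)^{1+q}/((1-a)·ln n + 1 + q)^{1+q}. If a ∈ [1,∞), then c·[(ln n)^{1+q}/((a-1)·ln n + 1 + q) + (ln n)^{q}] ≤ ∑_{i=1}^{n} i^{-a}·(ln(n/i))^{q} ≤ C·(ln n)^{1+q}/((a-1)·ln n + 1 + q) + (ln n)^{q}. -/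

import Mathlib

set_option maxHeartbeats 2000000
open Real Finset
section LorentzHelpers

lemma exp_sub_one_le' {s : ℝ} : Real.exp s - 1 ≤ s * Real.exp s := by
  have h := Real.add_one_le_exp (-s)
  have he : 0 < Real.exp s := Real.exp_pos s
  have h2 : (-s + 1) * Real.exp s ≤ Real.exp (-s) * Real.exp s :=
    mul_le_mul_of_nonneg_right h he.le
  rw [← Real.exp_add] at h2
  simp at h2
  nlinarith [h2]

lemma exp_neg_mul_le {v : ℝ} : v * Real.exp (-v) ≤ 1 - Real.exp (-v) := by
  have h := Real.add_one_le_exp v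
  have he : 0 < Real.exp (-v) := Real.exp_pos _
  have h2 : (v + 1) * Real.exp (-v) ≤ Real.exp v * Real.exp (-v) :=
    mul_le_mul_of_nonneg_right h he.le
  rw [← Real.exp_add] at h2
  simp at h2
  nlinarith

lemma log_succ_lb {r : ℝ} (hr : 0 < r) : 1/(r+1) ≤ Real.log (r+1) - Real.log r := by
  have h : Real.log (r/(r+1)) ≤ r/(r+1) - 1 := Real.log_le_sub_one_of_pos (by positivity)
  rw [Real.log_div (by positivity) (by positivity)] at h
  have h2 : r/(r+1) - 1 = -(1/(r+1)) := by field_simp; ring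
  rw [h2] at h; linarith

lemma log_succ_ub {r : ℝ} (hr : 0 < r) : Real.log (r+1) - Real.log r ≤ 1/r := by
  have h : Real.log ((r+1)/r) ≤ (r+1)/r - 1 := Real.log_le_sub_one_of_pos (by positivity)
  rw [Real.log_div (by positivity) (by positivity)] at h
  have h2 : (r+1)/r - 1 = 1/r := by field_simp; ring
  rw [h2] at h; linarith

/-- step for lower telescope: (r+1)^β - r^β ≤ 2 β r^(β-1) -/
lemma step_lower {β r : ℝ} (hβ0 : 0 < β) (hβ1 : β ≤ 1) (hr : 1 ≤ r) :
    (r+1)^β - r^β ≤ 2*β*r^(β-1) := by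
  have hr0 : 0 < r := by linarith
  set s : ℝ := Real.log (r+1) - Real.log r with hs
  have hs0 : 0 ≤ s := by
    have := log_succ_lb hr0
    have : (0:ℝ) < 1/(r+1) := by positivity
    nlinarith [log_succ_lb hr0]
  have hsub : s ≤ 1/r := log_succ_ub hr0
  have hr1 : (r+1)^β = r^β * Real.exp (β*s) := by
    rw [Real.rpow_def_of_pos (by linarith), Real.rpow_def_of_pos hr0, ← Real.exp_add]
    congr 1; rw [hs]; ring
  have hes : Real.exp (β*s) - 1 ≤ (β*s) * Real.exp (β*s) := exp_sub_one_le'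
  have hmono : Real.exp (β*s) ≤ Real.exp s := by
    apply Real.exp_le_exp.mpr; nlinarith
  have hexps : Real.exp s = (r+1)/r := by
    rw [hs, ← Real.log_div (by positivity) (by positivity), Real.exp_log (by positivity)]
  have hfrac : (r+1)/r ≤ 2 := by rw [div_le_iff₀ hr0]; linarith
  have hrb : 0 < r^β := Real.rpow_pos_of_pos hr0 _
  have hkey : (r+1)^β - r^β ≤ r^β * (β*s*Real.exp s) := by
    rw [hr1]
    have : Real.exp (β*s) - 1 ≤ β*s*Real.exp s := by
      nlinarith [mul_le_mul_of_nonneg_left hmono (mul_nonneg hβ0.le hs0)]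
    nlinarith
  have hfin : r^β * (β*s*Real.exp s) ≤ r^β * (β*(1/r)*2) := by
    apply mul_le_mul_of_nonneg_left _ hrb.le
    rw [hexps]
    have h1 : s*((r+1)/r) ≤ (1/r)*2 := by
      have : 0 ≤ (r+1)/r := by positivity
      nlinarith
    nlinarith
  have hpow : r^β * (1/r) = r^(β-1) := by
    rw [show β - 1 = β + (-1) by ring, Real.rpow_add hr0, Real.rpow_neg_one, one_div]
  calc (r+1)^β - r^β ≤ r^β * (β*s*Real.exp s) := hkey
    _ ≤ r^β * (β*(1/r)*2) := hfin
    _ = 2*β*r^(β-1) := by rw [show r^β * (β*(1/r)*2) = 2*β*(r^β*(1/r)) by ring, hpow]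

/-- step for upper telescope 1: (γ/2) (r+1)^(γ-1) ≤ (r+1)^γ - r^γ -/
lemma step_upper1 {γ r : ℝ} (hγ0 : 0 < γ) (hγ1 : γ ≤ 1) (hr : 1 ≤ r) :
    (γ/2)*(r+1)^(γ-1) ≤ (r+1)^γ - r^γ := by
  have hr0 : 0 < r := by linarith
  have hr10 : (0:ℝ) < r + 1 := by linarith
  set s : ℝ := Real.log (r+1) - Real.log r with hs
  have hslb : 1/(r+1) ≤ s := log_succ_lb hr0
  have hs0 : 0 ≤ s := le_trans (by positivity) hslb
  have hr1 : r^γ = (r+1)^γ * Real.exp (-(γ*s)) := by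
    rw [Real.rpow_def_of_pos hr0, Real.rpow_def_of_pos hr10, ← Real.exp_add]
    congr 1; rw [hs]; ring
  have h1 : γ*s*Real.exp (-(γ*s)) ≤ 1 - Real.exp (-(γ*s)) := exp_neg_mul_le
  have hm : Real.exp (-s) ≤ Real.exp (-(γ*s)) := by
    apply Real.exp_le_exp.mpr; nlinarith
  have hexps : Real.exp (-s) = r/(r+1) := by
    rw [hs, show -(Real.log (r+1) - Real.log r) = Real.log r - Real.log (r+1) by ring,
      ← Real.log_div (by positivity) (by positivity), Real.exp_log (by positivity)]
  have hhalf : (1:ℝ)/2 ≤ r/(r+1) := by rw [div_le_div_iff₀ (by norm_num) hr10]; linarith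
  have hlow : γ*(1/(r+1))*(1/2) ≤ γ*s*Real.exp (-(γ*s)) := by
    have e1 : (1:ℝ)/2 ≤ Real.exp (-(γ*s)) := by
      calc (1:ℝ)/2 ≤ r/(r+1) := hhalf
        _ = Real.exp (-s) := hexps.symm
        _ ≤ Real.exp (-(γ*s)) := hm
    have : 0 < Real.exp (-(γ*s)) := Real.exp_pos _
    have h2 : γ*(1/(r+1)) ≤ γ*s := by nlinarith
    calc γ*(1/(r+1))*(1/2) ≤ (γ*s)*Real.exp (-(γ*s)) :=
          mul_le_mul h2 e1 (by norm_num) (mul_nonneg hγ0.le hs0)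
      _ = γ*s*Real.exp (-(γ*s)) := by ring
  have hpow : (r+1)^γ * (1/(r+1)) = (r+1)^(γ-1) := by
    rw [show γ - 1 = γ + (-1) by ring, Real.rpow_add hr10, Real.rpow_neg_one, one_div]
  have hrp : 0 < (r+1)^γ := Real.rpow_pos_of_pos hr10 _
  have key : (r+1)^γ * (γ*(1/(r+1))*(1/2)) ≤ (r+1)^γ - r^γ := by
    rw [hr1]
    have := mul_le_mul_of_nonneg_left (le_trans hlow h1) hrp.le
    nlinarith
  calc (γ/2)*(r+1)^(γ-1) = (r+1)^γ * (γ*(1/(r+1))*(1/2)) := by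
        rw [← hpow]; ring
    _ ≤ (r+1)^γ - r^γ := key

/-- step for upper telescope 2: γ (r+1)^(-(1+γ)) ≤ r^(-γ) - (r+1)^(-γ) -/
lemma step_upper2 {γ r : ℝ} (hγ : 0 ≤ γ) (hr : 1 ≤ r) :
    γ*(r+1)^(-(1+γ)) ≤ r^(-γ) - (r+1)^(-γ) := by
  have hr0 : 0 < r := by linarith
  have hr10 : (0:ℝ) < r + 1 := by linarith
  set s : ℝ := Real.log (r+1) - Real.log r with hs
  have hslb : 1/(r+1) ≤ s := log_succ_lb hr0
  have hr1 : r^(-γ) = (r+1)^(-γ) * Real.exp (γ*s) := by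
    rw [Real.rpow_def_of_pos hr0, Real.rpow_def_of_pos hr10, ← Real.exp_add]
    congr 1; rw [hs]; ring
  have h1 : γ*s + 1 ≤ Real.exp (γ*s) := Real.add_one_le_exp _
  have hrp : 0 < (r+1)^(-γ) := Real.rpow_pos_of_pos hr10 _
  have hpow : (r+1)^(-γ) * (1/(r+1)) = (r+1)^(-(1+γ)) := by
    rw [show -(1+γ) = -γ + (-1) by ring, Real.rpow_add hr10, Real.rpow_neg_one, one_div]
  have key : (r+1)^(-γ) * (γ*s) ≤ r^(-γ) - (r+1)^(-γ) := by
    rw [hr1]; nlinarith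
  have h2 : γ*(1/(r+1)) ≤ γ*s := by nlinarith
  calc γ*(r+1)^(-(1+γ)) = (r+1)^(-γ) * (γ*(1/(r+1))) := by rw [← hpow]; ring
    _ ≤ (r+1)^(-γ) * (γ*s) := by nlinarith
    _ ≤ r^(-γ) - (r+1)^(-γ) := key

lemma harm_lower (m : ℕ) : Real.log (m+1) ≤ ∑ i ∈ Icc 1 m, (i:ℝ)⁻¹ := by
  induction m with
  | zero => simp
  | succ m ih =>
    rw [Finset.sum_Icc_succ_top (by omega)]
    have h := log_succ_ub (r := (m:ℝ)+1) (by positivity)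
    push_cast
    have h2 : ((m:ℝ)+1)⁻¹ = 1/((m:ℝ)+1) := by rw [one_div]
    push_cast at ih
    linarith [h2 ▸ h]

lemma harm_upper (n : ℕ) : ∑ i ∈ Icc 2 n, (i:ℝ)⁻¹ ≤ Real.log n := by
  induction n with
  | zero => simp
  | succ n ih =>
    rcases Nat.lt_or_ge n 1 with h1 | h1
    · interval_cases n <;> simp [Finset.Icc_eq_empty_of_lt]
    · rw [Finset.sum_Icc_succ_top (by omega)]
      have hn0 : (0:ℝ) < n := by
        have : (1:ℝ) ≤ n := by exact_mod_cast h1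
        linarith
      have h := log_succ_lb (r := (n:ℝ)) hn0
      push_cast
      have h2 : ((n:ℝ)+1)⁻¹ = 1/((n:ℝ)+1) := (one_div _).symm
      linarith [h2 ▸ h]

lemma exp_neg_two_le : Real.exp (-2) ≤ 1/3 := by
  have h7 : (3:ℝ) ≤ Real.exp 2 := by nlinarith [Real.add_one_le_exp 2]
  rw [Real.exp_neg]
  calc (Real.exp 2)⁻¹ ≤ (3:ℝ)⁻¹ := inv_anti₀ (by norm_num) h7
    _ = 1/3 := by norm_num

lemma three_le_exp_two' : (3:ℝ) ≤ Real.exp 2 := by nlinarith [Real.add_one_le_exp 2]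

lemma tel_lower {β : ℝ} (hβ0 : 0 < β) (hβ1 : β ≤ 1) (m : ℕ) :
    (((m:ℝ)+1)^β - 1)/(2*β) ≤ ∑ i ∈ Icc 1 m, (i:ℝ)^(β-1) := by
  induction m with
  | zero => simp
  | succ m ih =>
    rw [Finset.sum_Icc_succ_top (by omega)]
    have hstep := step_lower hβ0 hβ1 (r := (m:ℝ)+1) (by have := Nat.cast_nonneg (α:=ℝ) m; linarith)
    have h2β : (0:ℝ) < 2*β := by linarith
    rw [div_le_iff₀ h2β] at ih ⊢
    push_cast
    nlinarith [hstep]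

lemma tel_upper1 {γ : ℝ} (hγ0 : 0 < γ) (hγ1 : γ ≤ 1) (n : ℕ) (hn : 1 ≤ n) :
    ∑ i ∈ Icc 2 n, (i:ℝ)^(γ-1) ≤ 2*((n:ℝ)^γ - 1)/γ := by
  induction n, hn using Nat.le_induction with
  | base => simp [Finset.Icc_eq_empty_of_lt]
  | succ n hn ih =>
    rw [Finset.sum_Icc_succ_top (by omega)]
    have hstep := step_upper1 hγ0 hγ1 (r := (n:ℝ)) (by exact_mod_cast hn)
    rw [le_div_iff₀ hγ0] at ih ⊢
    push_cast
    nlinarith [hstep]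

lemma tel_upper2 {γ : ℝ} (hγ : 0 ≤ γ) (n : ℕ) (hn : 1 ≤ n) :
    γ * ∑ i ∈ Icc 2 n, (i:ℝ)^(-(1+γ)) ≤ 1 - (n:ℝ)^(-γ) := by
  induction n, hn using Nat.le_induction with
  | base => simp [Finset.Icc_eq_empty_of_lt]
  | succ n hn ih =>
    rw [Finset.sum_Icc_succ_top (by omega)]
    have hstep := step_upper2 hγ (r := (n:ℝ)) (by exact_mod_cast hn)
    push_cast
    push_cast at ih
    nlinarith [hstep]

/-- pointwise: w^q ≤ T^q exp(q(w/T - 1)) -/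
lemma rpow_le_exp_bound {q T w : ℝ} (hq : 0 ≤ q) (hT : 0 < T) (hw : 0 ≤ w) :
    w ^ q ≤ T ^ q * Real.exp (q*(w/T - 1)) := by
  rcases eq_or_lt_of_le hq with hq0 | hq0
  · rw [← hq0]; simp
  rcases eq_or_lt_of_le hw with hw0 | hw0
  · rw [← hw0, Real.zero_rpow (ne_of_gt hq0)]
    positivity
  · rw [Real.rpow_def_of_pos hw0, Real.rpow_def_of_pos hT, ← Real.exp_add]
    apply Real.exp_le_exp.mpr
    have hlog : Real.log (w/T) ≤ w/T - 1 := Real.log_le_sub_one_of_pos (by positivity)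
    rw [Real.log_div (ne_of_gt hw0) (ne_of_gt hT)] at hlog
    nlinarith

lemma term_nonneg {a q : ℝ} {n : ℕ} :
    ∀ i ∈ Icc 1 n, 0 ≤ (i:ℝ)^(-a) * Real.log ((n:ℝ)/i) ^ q := by
  intro i hi
  rw [Finset.mem_Icc] at hi
  have hi0 : (0:ℝ) < i := by exact_mod_cast hi.1
  have hni : (1:ℝ) ≤ (n:ℝ)/i := by
    rw [le_div_iff₀ hi0]; simp; exact_mod_cast hi.2
  exact mul_nonneg (Real.rpow_nonneg hi0.le _) (Real.rpow_nonneg (Real.log_nonneg hni) _)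

lemma partA {a q : ℝ} {n : ℕ} (ha0 : 0 ≤ a) (ha : a ≤ 1) (hq : 0 ≤ q) (hn : 2 ≤ n) :
    Real.exp (-4) ^ (1+q) * (n:ℝ)^(1-a) * (1+q)^(1+q) * Real.log n ^ (1+q) /
        ((1-a)*Real.log n + 1 + q) ^ (1+q) ≤
      ∑ i ∈ Icc 1 n, (i:ℝ)^(-a) * Real.log ((n:ℝ)/i) ^ q := by
  have hn1 : (1:ℝ) < n := by exact_mod_cast (by omega : 1 < n)
  have hn0 : (0:ℝ) < n := by linarith
  obtain ⟨L, hLdef⟩ : ∃ L : ℝ, L = Real.log n := ⟨_, rfl⟩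
  have hL0 : 0 < L := hLdef ▸ Real.log_pos hn1
  obtain ⟨β, hβdef⟩ : ∃ β : ℝ, β = 1 - a := ⟨_, rfl⟩
  have hβ0 : 0 ≤ β := by rw [hβdef]; linarith
  have hβ1 : β ≤ 1 := by rw [hβdef]; linarith
  have hq1 : (0:ℝ) < 1 + q := by linarith
  obtain ⟨x, hxdef⟩ : ∃ x : ℝ, x = β*L + 1 + q := ⟨_, rfl⟩
  have hβL : 0 ≤ β*L := mul_nonneg hβ0 hL0.le
  have hx1 : 1 + q ≤ x := by rw [hxdef]; linarith
  have hx0 : 0 < x := by linarith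
  obtain ⟨t, htdef⟩ : ∃ t : ℝ, t = (1+q)*L/x := ⟨_, rfl⟩
  have ht0 : 0 < t := htdef ▸ div_pos (mul_pos hq1 hL0) hx0
  have htL : t ≤ L := by
    rw [htdef, div_le_iff₀ hx0]
    nlinarith
  have hβt : β * t ≤ 1 + q := by
    rw [htdef, mul_div_assoc', div_le_iff₀ hx0]
    nlinarith
  obtain ⟨R, hRdef⟩ : ∃ R : ℝ, R = (n:ℝ) * Real.exp (-(t/2)) := ⟨_, rfl⟩
  have hRexp : R = Real.exp (L - t/2) := by
    rw [hRdef, ← Real.exp_log hn0, ← Real.exp_add, ← hLdef]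
    ring_nf
  have hR1 : 1 ≤ R := by
    rw [hRexp]
    apply Real.one_le_exp
    linarith
  have hR0 : 0 < R := by linarith
  obtain ⟨m, hmdef⟩ : ∃ m : ℕ, m = ⌊R⌋₊ := ⟨_, rfl⟩
  have hm1 : 1 ≤ m := hmdef ▸ Nat.le_floor (by exact_mod_cast hR1)
  have hmr : (m:ℝ) ≤ R := hmdef ▸ Nat.floor_le hR0.le
  have hmR : R < (m:ℝ)+1 := hmdef ▸ Nat.lt_floor_add_one R
  have hmn : m ≤ n := by
    have h2 : R ≤ (n:ℝ) := by
      rw [hRdef]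
      nlinarith [Real.exp_le_one_iff.mpr (show -(t/2) ≤ 0 by linarith), Real.exp_pos (-(t/2))]
    exact_mod_cast hmr.trans h2
  obtain ⟨A, hAdef⟩ : ∃ A : ℝ, A = ∑ i ∈ Icc 1 m, (i:ℝ)^(-a) := ⟨_, rfl⟩
  obtain ⟨S, hSdef⟩ : ∃ S : ℝ, S = ∑ i ∈ Icc 1 n, (i:ℝ)^(-a) * Real.log ((n:ℝ)/i) ^ q := ⟨_, rfl⟩
  rw [← hLdef, ← hSdef, show (1-a)*L + 1 + q = x by rw [hxdef, hβdef]]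
  have hlogm : Real.log m ≤ L - t/2 := by
    calc Real.log m ≤ Real.log R := Real.log_le_log (by exact_mod_cast hm1) hmr
      _ = L - t/2 := by rw [hRexp, Real.log_exp]
  have hstep1 : (t/2)^q * A ≤ S := by
    rw [hAdef, hSdef, Finset.mul_sum]
    have hsub : Icc 1 m ⊆ Icc 1 n := Finset.Icc_subset_Icc_right hmn
    calc ∑ i ∈ Icc 1 m, (t/2)^q * (i:ℝ)^(-a)
        ≤ ∑ i ∈ Icc 1 m, (i:ℝ)^(-a) * Real.log ((n:ℝ)/i) ^ q := by
          apply Finset.sum_le_sum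
          intro i hi
          rw [Finset.mem_Icc] at hi
          have hi1 : (1:ℝ) ≤ i := by exact_mod_cast hi.1
          have hi0 : (0:ℝ) < i := by linarith
          have hlogi : Real.log i ≤ L - t/2 := by
            calc Real.log i ≤ Real.log m := Real.log_le_log hi0 (by exact_mod_cast hi.2)
              _ ≤ L - t/2 := hlogm
          have hw : Real.log ((n:ℝ)/i) = L - Real.log i := by
            rw [hLdef]; exact Real.log_div (ne_of_gt hn0) (ne_of_gt hi0)
          have hwt : t/2 ≤ Real.log ((n:ℝ)/i) := by rw [hw]; linarith
          have h3 : (t/2)^q ≤ Real.log ((n:ℝ)/i) ^ q :=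
            Real.rpow_le_rpow (by positivity) hwt hq
          calc (t/2)^q * (i:ℝ)^(-a) ≤ Real.log ((n:ℝ)/i) ^ q * (i:ℝ)^(-a) :=
                mul_le_mul_of_nonneg_right h3 (Real.rpow_nonneg hi0.le _)
            _ = (i:ℝ)^(-a) * Real.log ((n:ℝ)/i) ^ q := by ring
      _ ≤ ∑ i ∈ Icc 1 n, (i:ℝ)^(-a) * Real.log ((n:ℝ)/i) ^ q :=
          Finset.sum_le_sum_of_subset_of_nonneg hsub (fun i hi _ => term_nonneg i hi)
  obtain ⟨u, hudef⟩ : ∃ u : ℝ, u = β * (L - t/2) := ⟨_, rfl⟩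
  have hu0 : 0 ≤ u := by rw [hudef]; apply mul_nonneg hβ0; linarith
  have hux : 1 + u ≤ x := by
    have : u ≤ β * L := by rw [hudef]; nlinarith
    rw [hxdef]; linarith
  have hA : Real.exp u * (L/(4*x)) ≤ A := by
    have hconv : A = ∑ i ∈ Icc 1 m, (i:ℝ)^(β-1) := by
      rw [hAdef]
      apply Finset.sum_congr rfl
      intro i _
      congr 1
      rw [hβdef]; ring
    rcases eq_or_lt_of_le hβ0 with hβz | hβz
    · have hu0' : u = 0 := by rw [hudef, ← hβz]; ring
      have hA2 : Real.log (m+1) ≤ A := by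
        rw [hconv]
        have hpt : ∀ i ∈ Icc 1 m, (i:ℝ)⁻¹ ≤ (i:ℝ)^(β-1) := by
          intro i hi
          have he : (i:ℝ)^(β-1) = (i:ℝ)⁻¹ := by
            rw [← hβz]
            norm_num [Real.rpow_neg_one]
          exact le_of_eq he.symm
        calc Real.log (m+1) ≤ ∑ i ∈ Icc 1 m, (i:ℝ)⁻¹ := harm_lower m
          _ ≤ ∑ i ∈ Icc 1 m, (i:ℝ)^(β-1) := Finset.sum_le_sum hpt
      have h4 : L - t/2 ≤ Real.log (m+1) := by
        rw [← Real.log_exp (L - t/2), ← hRexp]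
        exact Real.log_le_log hR0 hmR.le
      rw [hu0', Real.exp_zero, one_mul]
      have h13 : L/(4*x) ≤ L/2 := by
        rw [div_le_div_iff₀ (by positivity) (by norm_num)]
        nlinarith
      linarith
    · have htel := tel_lower hβz hβ1 m
      rw [← hconv] at htel
      have hRβ : Real.exp u ≤ ((m:ℝ)+1)^β := by
        have h5 : R^β ≤ ((m:ℝ)+1)^β := Real.rpow_le_rpow hR0.le hmR.le hβ0
        have h6 : R^β = Real.exp u := by
          rw [hRexp, Real.rpow_def_of_pos (Real.exp_pos _), Real.log_exp, hudef]
          ring_nf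
        rw [← h6]; exact h5
      have hiu : Real.exp u * (u/(1+u)) ≤ Real.exp u - 1 := by
        have h7 : u/(1+u) ≤ 1 - Real.exp (-u) := by
          have h8 := Real.add_one_le_exp u
          have h9 : Real.exp (-u) ≤ 1/(1+u) := by
            rw [Real.exp_neg, one_div]
            exact inv_anti₀ (by linarith) (by linarith)
          have h10 : u/(1+u) = 1 - 1/(1+u) := by field_simp; ring
          linarith
        have h11 : 0 < Real.exp u := Real.exp_pos u
        have h14 := mul_le_mul_of_nonneg_left h7 h11.le
        have h15 : Real.exp u * (1 - Real.exp (-u)) = Real.exp u - 1 := by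
          rw [mul_sub, mul_one, ← Real.exp_add]; simp
        linarith
      have h12 : Real.exp u * (L/(4*x)) ≤ Real.exp u * (u/(1+u)) / (2*β) := by
        have hu1 : (0:ℝ) < 1 + u := by linarith
        have e : u/(1+u)/(2*β) = (L - t/2)/(2*(1+u)) := by
          rw [div_div, show (1+u)*(2*β) = β*(2*(1+u)) by ring, hudef,
            mul_div_mul_left _ _ (ne_of_gt hβz)]
        have h16 : L/(4*x) ≤ (L - t/2)/(2*(1+u)) := by
          rw [div_le_div_iff₀ (by positivity) (by positivity)]
          nlinarith
        calc Real.exp u * (L/(4*x)) ≤ Real.exp u * ((L - t/2)/(2*(1+u))) :=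
              mul_le_mul_of_nonneg_left h16 (Real.exp_pos u).le
          _ = Real.exp u * (u/(1+u)/(2*β)) := by rw [e]
          _ = Real.exp u * (u/(1+u)) / (2*β) := by ring
      calc Real.exp u * (L/(4*x)) ≤ Real.exp u * (u/(1+u)) / (2*β) := h12
        _ ≤ (Real.exp u - 1)/(2*β) := by gcongr
        _ ≤ (((m:ℝ)+1)^β - 1)/(2*β) := by gcongr
        _ ≤ A := htel
  -- final comparison
  have e1 : Real.exp (-4) ^ (1+q) = Real.exp ((-4)*(1+q)) := by
    rw [Real.rpow_def_of_pos (Real.exp_pos _), Real.log_exp]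
  have e2 : (n:ℝ)^(1-a) = Real.exp (β*L) := by
    rw [Real.rpow_def_of_pos hn0, ← hLdef, ← hβdef, mul_comm]
  have e3 : t^(1+q) = (1+q)^(1+q) * L^(1+q) / x^(1+q) := by
    rw [htdef, Real.div_rpow (by positivity) hx0.le, Real.mul_rpow hq1.le hL0.le]
  have e4 : t^(1+q) = t * t^q := by
    rw [show (1:ℝ)+q = 1+q from rfl, Real.rpow_add ht0, Real.rpow_one]
  have e5 : (t/2)^q = t^q * Real.exp (-(Real.log 2 * q)) := by
    rw [Real.div_rpow ht0.le (by norm_num), Real.rpow_def_of_pos (by norm_num : (0:ℝ) < 2),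
      Real.exp_neg, div_eq_mul_inv]
  have e6 : Real.exp (β*L) = Real.exp u * Real.exp (β*(t/2)) := by
    rw [← Real.exp_add, hudef]; ring_nf
  have egoal : Real.exp (-4) ^ (1+q) * (n:ℝ)^(1-a) * (1+q)^(1+q) * L^(1+q) / x^(1+q)
      = Real.exp ((-4)*(1+q)) * (Real.exp u * Real.exp (β*(t/2))) * (t * t^q) := by
    rw [e1, e2, e6, ← e4, e3]
    ring
  rw [egoal]
  -- core numeric inequality
  have hlog2u : Real.log 2 < 0.6931471808 := Real.log_two_lt_d9
  have hlog2l : (0.6931471803:ℝ) < Real.log 2 := Real.log_two_gt_d9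
  have core : Real.exp ((-4)*(1+q)) * Real.exp (β*(t/2)) * t
      ≤ Real.exp (-(Real.log 2 * q)) * (L/(4*x)) := by
    have c1 : Real.exp ((-4)*(1+q)) * Real.exp (β*(t/2)) * (1+q)
        ≤ Real.exp ((-4)*(1+q)) * Real.exp ((1+q)/2) * Real.exp q := by
      have d1 : Real.exp (β*(t/2)) ≤ Real.exp ((1+q)/2) := by
        apply Real.exp_le_exp.mpr; nlinarith
      have d2 : (1+q) ≤ Real.exp q := by nlinarith [Real.add_one_le_exp q]
      have := mul_le_mul d1 d2 hq1.le (Real.exp_pos _).le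
      nlinarith [Real.exp_pos ((-4)*(1+q)), this, mul_le_mul_of_nonneg_left this
        (Real.exp_pos ((-4)*(1+q))).le]
    have c2 : Real.exp ((-4)*(1+q)) * Real.exp ((1+q)/2) * Real.exp q
        ≤ Real.exp (-(Real.log 2 * q)) / 4 := by
      rw [← Real.exp_add, ← Real.exp_add]
      have c3 : (4:ℝ) = Real.exp (2*Real.log 2) := by
        rw [show (2:ℝ)*Real.log 2 = Real.log 4 by
          rw [show (4:ℝ) = 2^(2:ℕ) by norm_num, Real.log_pow]; push_cast; ring]
        rw [Real.exp_log]; norm_num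
      rw [c3, ← Real.exp_sub]
      apply Real.exp_le_exp.mpr
      nlinarith
    have c4 : Real.exp ((-4)*(1+q)) * Real.exp (β*(t/2)) * (1+q)
        ≤ Real.exp (-(Real.log 2 * q)) / 4 := c1.trans c2
    have hsplit2 : Real.exp ((-4)*(1+q)) * Real.exp (β*(t/2)) * t
        = (Real.exp ((-4)*(1+q)) * Real.exp (β*(t/2)) * (1+q)) * (L/x) := by
      rw [htdef]; ring
    have hsplit3 : Real.exp (-(Real.log 2 * q)) * (L/(4*x))
        = (Real.exp (-(Real.log 2 * q))/4) * (L/x) := by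
      field_simp
    rw [hsplit2, hsplit3]
    exact mul_le_mul_of_nonneg_right c4 (by positivity)
  -- assemble
  have final : Real.exp ((-4)*(1+q)) * (Real.exp u * Real.exp (β*(t/2))) * (t * t^q)
      ≤ (t/2)^q * (Real.exp u * (L/(4*x))) := by
    rw [e5]
    have lhs_eq : Real.exp ((-4)*(1+q)) * (Real.exp u * Real.exp (β*(t/2))) * (t * t^q)
        = (Real.exp ((-4)*(1+q)) * Real.exp (β*(t/2)) * t) * (Real.exp u * t^q) := by ring
    have rhs_eq : t^q * Real.exp (-(Real.log 2 * q)) * (Real.exp u * (L/(4*x)))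
        = (Real.exp (-(Real.log 2 * q)) * (L/(4*x))) * (Real.exp u * t^q) := by ring
    rw [lhs_eq, rhs_eq]
    apply mul_le_mul_of_nonneg_right core
    positivity
  calc Real.exp ((-4)*(1+q)) * (Real.exp u * Real.exp (β*(t/2))) * (t * t^q)
      ≤ (t/2)^q * (Real.exp u * (L/(4*x))) := final
    _ ≤ (t/2)^q * A := by
        apply mul_le_mul_of_nonneg_left hA (by positivity)
    _ ≤ S := hstep1

lemma partB {a q : ℝ} {n : ℕ} (ha0 : 0 ≤ a) (ha : a ≤ 1) (hq : 0 ≤ q) (hn : 2 ≤ n) :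
    ∑ i ∈ Icc 1 n, (i:ℝ)^(-a) * Real.log ((n:ℝ)/i) ^ q ≤
      Real.exp 4 ^ (1+q) * (n:ℝ)^(1-a) * (1+q)^(1+q) * Real.log n ^ (1+q) /
        ((1-a)*Real.log n + 1 + q) ^ (1+q) := by
  have hn1 : (1:ℝ) < n := by exact_mod_cast (by omega : 1 < n)
  have hn0 : (0:ℝ) < n := by linarith
  obtain ⟨L, hLdef⟩ : ∃ L : ℝ, L = Real.log n := ⟨_, rfl⟩
  have hL0 : 0 < L := hLdef ▸ Real.log_pos hn1
  have hLl2 : Real.log 2 ≤ L := by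
    rw [hLdef]
    exact Real.log_le_log (by norm_num) (by exact_mod_cast hn)
  have hlog2l : (0.6931471803:ℝ) < Real.log 2 := Real.log_two_gt_d9
  have hlog2u : Real.log 2 < 0.6931471808 := Real.log_two_lt_d9
  obtain ⟨β, hβdef⟩ : ∃ β : ℝ, β = 1 - a := ⟨_, rfl⟩
  have hβ0 : 0 ≤ β := by rw [hβdef]; linarith
  have hβ1 : β ≤ 1 := by rw [hβdef]; linarith
  have hq1 : (0:ℝ) < 1 + q := by linarith
  obtain ⟨x, hxdef⟩ : ∃ x : ℝ, x = β*L + 1 + q := ⟨_, rfl⟩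
  have hβL : 0 ≤ β*L := mul_nonneg hβ0 hL0.le
  have hx1 : 1 + q ≤ x := by rw [hxdef]; linarith
  have hx0 : 0 < x := by linarith
  obtain ⟨t, htdef⟩ : ∃ t : ℝ, t = (1+q)*L/x := ⟨_, rfl⟩
  have ht0 : 0 < t := htdef ▸ div_pos (mul_pos hq1 hL0) hx0
  obtain ⟨S, hSdef⟩ : ∃ S : ℝ, S = ∑ i ∈ Icc 1 n, (i:ℝ)^(-a) * Real.log ((n:ℝ)/i) ^ q := ⟨_, rfl⟩
  rw [← hLdef, ← hSdef, show (1-a)*L + 1 + q = x by rw [hxdef, hβdef]]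
  have e1 : Real.exp 4 ^ (1+q) = Real.exp (4*(1+q)) := by
    rw [Real.rpow_def_of_pos (Real.exp_pos _), Real.log_exp]
  have e2 : (n:ℝ)^(1-a) = Real.exp (β*L) := by
    rw [Real.rpow_def_of_pos hn0, ← hLdef, ← hβdef, mul_comm]
  have e3 : t^(1+q) = (1+q)^(1+q) * L^(1+q) / x^(1+q) := by
    rw [htdef, Real.div_rpow (by positivity) hx0.le, Real.mul_rpow hq1.le hL0.le]
  have egoal : Real.exp 4 ^ (1+q) * (n:ℝ)^(1-a) * (1+q)^(1+q) * L^(1+q) / x^(1+q)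
      = Real.exp (4*(1+q)) * Real.exp (β*L) * t^(1+q) := by
    rw [e1, e2, e3]; ring
  rw [egoal]
  -- common facts about w
  have hwfacts : ∀ i ∈ Icc 1 n, (0:ℝ) < i ∧ 0 ≤ Real.log i ∧
      Real.log ((n:ℝ)/i) = L - Real.log i ∧ 0 ≤ L - Real.log i := by
    intro i hi
    rw [Finset.mem_Icc] at hi
    have hi1 : (1:ℝ) ≤ i := by exact_mod_cast hi.1
    have hi0 : (0:ℝ) < i := by linarith
    have hlogiL : Real.log i ≤ L := by
      rw [hLdef]; exact Real.log_le_log hi0 (by exact_mod_cast hi.2)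
    refine ⟨hi0, Real.log_nonneg hi1, ?_, by linarith⟩
    rw [hLdef]; exact Real.log_div (ne_of_gt hn0) (ne_of_gt hi0)
  rcases le_or_gt (β*L) (1+q) with hcase | hcase
  · -- case (i)
    have hS1 : S ≤ Real.exp (β*L) * L^q * (1 + L) := by
      have key : ∀ i ∈ Icc 1 n, (i:ℝ)^(-a) * Real.log ((n:ℝ)/i) ^ q
          ≤ (Real.exp (β*L) * L^q) * (i:ℝ)⁻¹ := by
        intro i hi
        obtain ⟨hi0, hlogi0, hw, hw0⟩ := hwfacts i hi
        have hwL : (Real.log ((n:ℝ)/i)) ^ q ≤ L^q := by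
          apply Real.rpow_le_rpow (by rw [hw]; linarith) (by rw [hw]; linarith) hq
        have hia : (i:ℝ)^(-a) ≤ Real.exp (β*L) * (i:ℝ)⁻¹ := by
          have d1 : (i:ℝ)^(-a) = Real.exp (β * Real.log i) * (i:ℝ)⁻¹ := by
            rw [Real.rpow_def_of_pos hi0,
              show (i:ℝ)⁻¹ = Real.exp (-(Real.log i)) by rw [Real.exp_neg, Real.exp_log hi0],
              ← Real.exp_add]
            congr 1
            rw [hβdef]; ring
          rw [d1]
          apply mul_le_mul_of_nonneg_right _ (by positivity)
          apply Real.exp_le_exp.mpr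
          nlinarith
        have hwnn : 0 ≤ Real.log ((n:ℝ)/i) := by rw [hw]; exact hw0
        calc (i:ℝ)^(-a) * Real.log ((n:ℝ)/i) ^ q
            ≤ (Real.exp (β*L) * (i:ℝ)⁻¹) * L^q :=
              mul_le_mul hia hwL (Real.rpow_nonneg hwnn _) (by positivity)
          _ = (Real.exp (β*L) * L^q) * (i:ℝ)⁻¹ := by ring
      have hsum : ∑ i ∈ Icc 1 n, (i:ℝ)⁻¹ ≤ 1 + L := by
        have hsplit : Icc 1 n = insert 1 (Icc 2 n) := by
          ext z; simp [Finset.mem_Icc, Finset.mem_insert]; omega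
        rw [hsplit, Finset.sum_insert (by simp)]
        have := harm_upper n
        rw [← hLdef] at this
        simp only [Nat.cast_one, inv_one]
        linarith
      calc S ≤ ∑ i ∈ Icc 1 n, (Real.exp (β*L) * L^q) * (i:ℝ)⁻¹ := by
            rw [hSdef]; exact Finset.sum_le_sum key
        _ = (Real.exp (β*L) * L^q) * ∑ i ∈ Icc 1 n, (i:ℝ)⁻¹ := by rw [← Finset.mul_sum]
        _ ≤ (Real.exp (β*L) * L^q) * (1 + L) := by
            apply mul_le_mul_of_nonneg_left hsum (by positivity)
        _ = Real.exp (β*L) * L^q * (1 + L) := by ring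
    -- compare with target
    have hLt : L/2 ≤ t := by
      rw [htdef, le_div_iff₀ hx0]
      nlinarith
    have htpow : (L/2)^(1+q) ≤ t^(1+q) := Real.rpow_le_rpow (by positivity) hLt (by linarith)
    have hhalf : (L/2)^(1+q) = (L/2) * (L^q * Real.exp (-(Real.log 2 * q))) := by
      rw [Real.rpow_add (by positivity : (0:ℝ) < L/2), Real.rpow_one,
        Real.div_rpow hL0.le (by norm_num), Real.rpow_def_of_pos (by norm_num : (0:ℝ) < 2),
        Real.exp_neg]
      ring
    have hnum : L^q * (1 + L) ≤ Real.exp (4*(1+q)) * (L/2)^(1+q) := by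
      rw [hhalf]
      have h5 : (5:ℝ) ≤ Real.exp (4*(1+q)) * Real.exp (-(Real.log 2 * q)) := by
        rw [← Real.exp_add]
        calc (5:ℝ) ≤ Real.exp 4 := by nlinarith [Real.add_one_le_exp 4]
          _ ≤ Real.exp (4*(1+q) + -(Real.log 2 * q)) := by
              apply Real.exp_le_exp.mpr
              nlinarith
      have h6 : (1 + L) ≤ (Real.exp (4*(1+q)) * Real.exp (-(Real.log 2 * q))) * (L/2) := by
        have : 5 * (L/2) ≤ (Real.exp (4*(1+q)) * Real.exp (-(Real.log 2 * q))) * (L/2) := by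
          apply mul_le_mul_of_nonneg_right h5 (by positivity)
        nlinarith
      calc L^q * (1+L) ≤ L^q * ((Real.exp (4*(1+q)) * Real.exp (-(Real.log 2 * q))) * (L/2)) :=
            mul_le_mul_of_nonneg_left h6 (Real.rpow_nonneg hL0.le _)
        _ = Real.exp (4*(1+q)) * ((L/2) * (L^q * Real.exp (-(Real.log 2 * q)))) := by ring
    calc S ≤ Real.exp (β*L) * L^q * (1 + L) := hS1
      _ ≤ Real.exp (β*L) * (Real.exp (4*(1+q)) * (L/2)^(1+q)) := by
          rw [show Real.exp (β*L) * L^q * (1+L) = Real.exp (β*L) * (L^q * (1+L)) by ring]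
          exact mul_le_mul_of_nonneg_left hnum (Real.exp_pos _).le
      _ ≤ Real.exp (β*L) * (Real.exp (4*(1+q)) * t^(1+q)) := by
          apply mul_le_mul_of_nonneg_left _ (Real.exp_pos _).le
          exact mul_le_mul_of_nonneg_left htpow (Real.exp_pos _).le
      _ = Real.exp (4*(1+q)) * Real.exp (β*L) * t^(1+q) := by ring
  · -- case (ii) : 1 + q < β L
    have hβz : 0 < β := by
      rcases eq_or_lt_of_le hβ0 with h | h
      · exfalso; rw [← h] at hcase; simp at hcase; linarith
      · exact h
    obtain ⟨γ, hγdef⟩ : ∃ γ : ℝ, γ = β/(1+q) := ⟨_, rfl⟩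
    have hγ0 : 0 < γ := hγdef ▸ div_pos hβz hq1
    have hγ1 : γ ≤ 1 := by
      rw [hγdef, div_le_one hq1]; linarith
    obtain ⟨T₀, hT₀def⟩ : ∃ T₀ : ℝ, T₀ = (1+q)/β := ⟨_, rfl⟩
    have hT₀0 : 0 < T₀ := hT₀def ▸ div_pos hq1 hβz
    have hγT : γ * T₀ = 1 := by rw [hγdef, hT₀def]; field_simp
    obtain ⟨lam, hlamdef⟩ : ∃ lam : ℝ, lam = q*γ := ⟨_, rfl⟩
    have hlam0 : 0 ≤ lam := by rw [hlamdef]; positivity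
    have hlamβ : lam + γ = β := by
      rw [hlamdef, hγdef]; field_simp; ring
    set K : ℝ := T₀^q * Real.exp (-q) * Real.exp (lam*L) with hKdef
    have hK0 : 0 ≤ K := by positivity
    have key : ∀ i ∈ Icc 1 n, (i:ℝ)^(-a) * Real.log ((n:ℝ)/i) ^ q ≤ K * (i:ℝ)^(γ-1) := by
      intro i hi
      obtain ⟨hi0, hlogi0, hw, hw0⟩ := hwfacts i hi
      have h1 : Real.log ((n:ℝ)/i) ^ q ≤ T₀^q * Real.exp (q*(Real.log ((n:ℝ)/i)/T₀ - 1)) :=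
        rpow_le_exp_bound hq hT₀0 (by rw [hw]; exact hw0)
      have h2 : q*(Real.log ((n:ℝ)/i)/T₀ - 1) = lam*L + (-q) + Real.log i * (-lam) := by
        rw [hw, hlamdef, hγdef, hT₀def]
        field_simp
        ring
      have h3 : T₀^q * Real.exp (q*(Real.log ((n:ℝ)/i)/T₀ - 1))
          = T₀^q * Real.exp (-q) * Real.exp (lam*L) * (i:ℝ)^(-lam) := by
        rw [h2, Real.exp_add, Real.exp_add, Real.rpow_def_of_pos hi0]
        ring
      have h4 : (i:ℝ)^(-a) * (i:ℝ)^(-lam) = (i:ℝ)^(γ-1) := by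
        rw [← Real.rpow_add hi0]
        congr 1
        have : a = 1 - β := by rw [hβdef]; ring
        rw [this, ← hlamβ]; ring
      calc (i:ℝ)^(-a) * Real.log ((n:ℝ)/i) ^ q
          ≤ (i:ℝ)^(-a) * (T₀^q * Real.exp (-q) * Real.exp (lam*L) * (i:ℝ)^(-lam)) := by
            apply mul_le_mul_of_nonneg_left _ (Real.rpow_nonneg hi0.le _)
            rw [← h3]; exact h1
        _ = K * ((i:ℝ)^(-a) * (i:ℝ)^(-lam)) := by rw [hKdef]; ring
        _ = K * (i:ℝ)^(γ-1) := by rw [h4]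
    have hsum : ∑ i ∈ Icc 1 n, (i:ℝ)^(γ-1) ≤ 1 + 2*Real.exp (γ*L)/γ := by
      have hsplit : Icc 1 n = insert 1 (Icc 2 n) := by
        ext z; simp [Finset.mem_Icc, Finset.mem_insert]; omega
      rw [hsplit, Finset.sum_insert (by simp)]
      have h7 := tel_upper1 hγ0 hγ1 n (by omega)
      have h8 : (n:ℝ)^γ = Real.exp (γ*L) := by
        rw [Real.rpow_def_of_pos hn0, ← hLdef, mul_comm]
      simp only [Nat.cast_one, Real.one_rpow]
      have h9 : 2*((n:ℝ)^γ - 1)/γ ≤ 2*Real.exp (γ*L)/γ := by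
        gcongr
        linarith [h8, Real.exp_pos (γ*L)]
      linarith [h7, h9]
    have hT₀1 : 1 ≤ T₀ := by rw [hT₀def, le_div_iff₀ hβz]; linarith
    have eT : T₀^(1+q) = T₀^q * T₀ := by
      rw [Real.rpow_add hT₀0, Real.rpow_one]; ring
    have eβ : Real.exp (lam*L) * Real.exp (γ*L) = Real.exp (β*L) := by
      rw [← Real.exp_add, ← add_mul, hlamβ]
    have hγinv : 1/γ = T₀ := by
      rw [eq_comm, eq_div_iff hγ0.ne']
      linarith [hγT, mul_comm γ T₀]
    have hKb : K * (1 + 2*Real.exp (γ*L)/γ) ≤ 3 * (Real.exp (-q) * Real.exp (β*L) * T₀^(1+q)) := by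
      have expand : K * (1 + 2*Real.exp (γ*L)/γ)
          = T₀^q*Real.exp (-q)*Real.exp (lam*L)
            + 2*(T₀^q*Real.exp (-q))*(Real.exp (lam*L)*Real.exp (γ*L))*(1/γ) := by
        rw [hKdef]; ring
      rw [expand, eβ, hγinv, eT]
      have p1 : Real.exp (lam*L) ≤ Real.exp (β*L) := by
        apply Real.exp_le_exp.mpr
        have hlamle : lam ≤ β := by linarith [hγ0, hlamβ]
        exact mul_le_mul_of_nonneg_right hlamle hL0.le
      have pA : (0:ℝ) < T₀^q := Real.rpow_pos_of_pos hT₀0 _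
      have g1 : T₀^q*Real.exp (-q)*Real.exp (lam*L) ≤ T₀^q*Real.exp (-q)*Real.exp (β*L) :=
        mul_le_mul_of_nonneg_left p1 (by positivity)
      have g2 : T₀^q*Real.exp (-q)*Real.exp (β*L) ≤ T₀^q*Real.exp (-q)*Real.exp (β*L)*T₀ :=
        le_mul_of_one_le_right (by positivity) hT₀1
      calc T₀^q*Real.exp (-q)*Real.exp (lam*L)
            + 2*(T₀^q*Real.exp (-q))*Real.exp (β*L)*T₀
          ≤ T₀^q*Real.exp (-q)*Real.exp (β*L)*T₀
            + 2*(T₀^q*Real.exp (-q))*Real.exp (β*L)*T₀ := by linarith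
        _ = 3*(Real.exp (-q)*Real.exp (β*L)*(T₀^q*T₀)) := by ring
    -- compare with target
    have hxβL : x ≤ 2*(β*L) := by rw [hxdef]; linarith
    have htT : T₀/2 ≤ t := by
      rw [htdef, hT₀def, div_div, div_le_div_iff₀ (by positivity) hx0]
      linarith [mul_le_mul_of_nonneg_left hxβL hq1.le]
    have htpow : (T₀/2)^(1+q) ≤ t^(1+q) := Real.rpow_le_rpow (by positivity) htT (by linarith)
    have e7 : (T₀/2)^(1+q) = T₀^(1+q) * Real.exp (-(Real.log 2*(1+q))) := by
      rw [Real.div_rpow hT₀0.le (by norm_num), Real.rpow_def_of_pos (by norm_num : (0:ℝ) < 2),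
        Real.exp_neg, div_eq_mul_inv]
    have hnum2 : 3 * Real.exp (-q) ≤ Real.exp (4*(1+q)) * Real.exp (-(Real.log 2*(1+q))) := by
      rw [← Real.exp_add]
      calc 3 * Real.exp (-q) ≤ Real.exp 2 * Real.exp (-q) :=
            mul_le_mul_of_nonneg_right three_le_exp_two' (Real.exp_pos (-q)).le
        _ = Real.exp (2 + -q) := by rw [← Real.exp_add]
        _ ≤ Real.exp (4*(1+q) + -(Real.log 2*(1+q))) := by
            apply Real.exp_le_exp.mpr
            linarith [mul_le_mul_of_nonneg_right hlog2u.le hq]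
    have hfin2 : 3 * (Real.exp (-q) * Real.exp (β*L) * T₀^(1+q))
        ≤ Real.exp (4*(1+q)) * Real.exp (β*L) * t^(1+q) := by
      have w1 : 3 * (Real.exp (-q) * Real.exp (β*L) * T₀^(1+q))
          = (3 * Real.exp (-q)) * (Real.exp (β*L) * T₀^(1+q)) := by ring
      have w2 : Real.exp (4*(1+q)) * Real.exp (β*L) * ((T₀/2)^(1+q))
          = (Real.exp (4*(1+q)) * Real.exp (-(Real.log 2*(1+q)))) * (Real.exp (β*L) * T₀^(1+q)) := by
        rw [e7]; ring
      calc 3 * (Real.exp (-q) * Real.exp (β*L) * T₀^(1+q))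
          = (3 * Real.exp (-q)) * (Real.exp (β*L) * T₀^(1+q)) := w1
        _ ≤ (Real.exp (4*(1+q)) * Real.exp (-(Real.log 2*(1+q)))) * (Real.exp (β*L) * T₀^(1+q)) := by
            apply mul_le_mul_of_nonneg_right hnum2 (by positivity)
        _ = Real.exp (4*(1+q)) * Real.exp (β*L) * ((T₀/2)^(1+q)) := w2.symm
        _ ≤ Real.exp (4*(1+q)) * Real.exp (β*L) * t^(1+q) := by
            apply mul_le_mul_of_nonneg_left htpow (by positivity)
    calc S ≤ ∑ i ∈ Icc 1 n, K * (i:ℝ)^(γ-1) := by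
          rw [hSdef]; exact Finset.sum_le_sum key
      _ = K * ∑ i ∈ Icc 1 n, (i:ℝ)^(γ-1) := by rw [← Finset.mul_sum]
      _ ≤ K * (1 + 2*Real.exp (γ*L)/γ) := mul_le_mul_of_nonneg_left hsum hK0
      _ ≤ 3 * (Real.exp (-q) * Real.exp (β*L) * T₀^(1+q)) := hKb
      _ ≤ Real.exp (4*(1+q)) * Real.exp (β*L) * t^(1+q) := hfin2
lemma partC {a q : ℝ} {n : ℕ} (ha : 1 ≤ a) (hq : 0 ≤ q) (hn : 2 ≤ n) :
    Real.exp (-4) * (Real.log n ^ (1+q) / ((a-1)*Real.log n + 1 + q) + Real.log n ^ q) ≤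
      ∑ i ∈ Icc 1 n, (i:ℝ)^(-a) * Real.log ((n:ℝ)/i) ^ q := by
  have hn1 : (1:ℝ) < n := by exact_mod_cast (by omega : 1 < n)
  have hn0 : (0:ℝ) < n := by linarith
  set L : ℝ := Real.log n with hLdef
  have hL0 : 0 < L := Real.log_pos hn1
  set δ : ℝ := a - 1 with hδdef
  have hδ0 : 0 ≤ δ := by simp [hδdef]; linarith
  set y : ℝ := δ*L + 1 + q with hydef
  have hδL : 0 ≤ δ*L := mul_nonneg hδ0 hL0.le
  have hy1 : 1 + q ≤ y := by simp [hydef]; linarith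
  have hy0 : 0 < y := by linarith
  set S := ∑ i ∈ Icc 1 n, (i:ℝ)^(-a) * Real.log ((n:ℝ)/i) ^ q with hSdef
  have hS1 : L ^ q ≤ S := by
    have h1 : (1:ℕ) ∈ Icc 1 n := by simp [Finset.mem_Icc]; omega
    have := Finset.single_le_sum (term_nonneg (a := a) (q := q) (n := n)) h1
    simpa using this
  set ε : ℝ := 1/y with hεdef
  have hε0 : 0 < ε := by positivity
  have hε1 : ε ≤ 1 := by rw [hεdef, div_le_one hy0]; linarith
  have hεq : ε*(1+q) ≤ 1 := by
    rw [hεdef, div_mul_eq_mul_div, div_le_one hy0]; linarith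
  have hεL : 0 ≤ ε*L := by positivity
  set m := ⌊Real.exp (ε*L)⌋₊ with hmdef
  have hm1 : 1 ≤ m := by
    apply Nat.le_floor
    simpa using Real.one_le_exp hεL
  have hmr : (m:ℝ) ≤ Real.exp (ε*L) := Nat.floor_le (by positivity)
  have hexpL : Real.exp (ε*L) ≤ (n:ℝ) := by
    rw [← Real.exp_log hn0]
    apply Real.exp_le_exp.mpr
    nlinarith
  have hmn : m ≤ n := by
    have : (m:ℝ) ≤ (n:ℝ) := hmr.trans hexpL
    exact_mod_cast this
  set K : ℝ := Real.exp (-(δ*(ε*L))) * (Real.exp (-1) * L^q) with hKdef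
  have hLq : (0:ℝ) ≤ L^q := Real.rpow_nonneg hL0.le _
  have hK0 : 0 ≤ K := by positivity
  have key : ∀ i ∈ Icc 1 m, K * (i:ℝ)⁻¹ ≤ (i:ℝ)^(-a) * Real.log ((n:ℝ)/i) ^ q := by
    intro i hi
    rw [Finset.mem_Icc] at hi
    have hi1 : (1:ℝ) ≤ i := by exact_mod_cast hi.1
    have hi0 : (0:ℝ) < i := by linarith
    have hlogi : Real.log i ≤ ε*L := by
      calc Real.log i ≤ Real.log m := Real.log_le_log hi0 (by exact_mod_cast hi.2)
        _ ≤ Real.log (Real.exp (ε*L)) := Real.log_le_log (by exact_mod_cast hm1) hmr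
        _ = ε*L := Real.log_exp _
    have hlogi0 : 0 ≤ Real.log i := Real.log_nonneg hi1
    have hw : Real.log ((n:ℝ)/i) = L - Real.log i := Real.log_div (ne_of_gt hn0) (ne_of_gt hi0)
    have factor1 : Real.exp (-(δ*(ε*L))) * (i:ℝ)⁻¹ ≤ (i:ℝ)^(-a) := by
      have hixp : (i:ℝ)^(-a) = Real.exp (Real.log i * (-a)) := Real.rpow_def_of_pos hi0 _
      have hinv : (i:ℝ)⁻¹ = Real.exp (-Real.log i) := by
        rw [Real.exp_neg, Real.exp_log hi0]
      rw [hixp, hinv, ← Real.exp_add]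
      apply Real.exp_le_exp.mpr
      have hδli : δ * Real.log i ≤ δ*(ε*L) := mul_le_mul_of_nonneg_left hlogi hδ0
      have : Real.log i * (-a) = -Real.log i - δ * Real.log i := by
        rw [hδdef]; ring
      rw [this]; linarith
    have factor2 : Real.exp (-1) * L^q ≤ Real.log ((n:ℝ)/i) ^ q := by
      rw [hw]
      have hz0 : 0 ≤ L*(1-ε) := by nlinarith
      have hz : L*(1-ε) ≤ L - Real.log i := by nlinarith
      have h2 : (L*(1-ε))^q ≤ (L - Real.log i)^q := Real.rpow_le_rpow hz0 hz hq
      have h3 : Real.exp (-1) * L^q ≤ (L*(1-ε))^q := by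
        rcases eq_or_lt_of_le hq with hq0 | hq0
        · rw [← hq0, Real.rpow_zero, Real.rpow_zero, mul_one]
          exact (Real.exp_le_one_iff).mpr (by norm_num)
        · have hε1' : ε < 1 := by nlinarith
          have h1ε : 0 < 1 - ε := by linarith
          rw [Real.mul_rpow hL0.le h1ε.le]
          have hlog1ε : 1 - 1/(1-ε) ≤ Real.log (1-ε) := by
            have h8 := Real.log_le_sub_one_of_pos (show (0:ℝ) < (1-ε)⁻¹ by positivity)
            rw [Real.log_inv] at h8
            rw [one_div]
            linarith
          have hq1 : -1 ≤ q * Real.log (1-ε) := by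
            have h4 : q * (1 - 1/(1-ε)) ≤ q * Real.log (1-ε) :=
              mul_le_mul_of_nonneg_left hlog1ε hq
            have h5 : -1 ≤ q * (1 - 1/(1-ε)) := by
              rw [show q * (1 - 1/(1-ε)) = -(q*ε/(1-ε)) by field_simp; ring,
                neg_le_neg_iff, div_le_one h1ε]
              nlinarith
            linarith
          have h9 : Real.exp (-1) ≤ (1-ε)^q := by
            rw [Real.rpow_def_of_pos h1ε]
            apply Real.exp_le_exp.mpr
            nlinarith
          calc Real.exp (-1) * L^q ≤ (1-ε)^q * L^q := mul_le_mul_of_nonneg_right h9 hLq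
            _ = L^q * (1-ε)^q := by ring
      linarith
    have hmm := mul_le_mul factor1 factor2 (by positivity) (Real.rpow_nonneg hi0.le _)
    calc K * (i:ℝ)⁻¹ = (Real.exp (-(δ*(ε*L))) * (i:ℝ)⁻¹) * (Real.exp (-1) * L^q) := by
          rw [hKdef]; ring
      _ ≤ (i:ℝ)^(-a) * Real.log ((n:ℝ)/i) ^ q := hmm
  have hsubset : Icc 1 m ⊆ Icc 1 n := Finset.Icc_subset_Icc_right hmn
  have hs2 : ∑ i ∈ Icc 1 m, K * (i:ℝ)⁻¹ ≤ S := by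
    calc ∑ i ∈ Icc 1 m, K * (i:ℝ)⁻¹ ≤ ∑ i ∈ Icc 1 m, (i:ℝ)^(-a) * Real.log ((n:ℝ)/i) ^ q :=
          Finset.sum_le_sum key
      _ ≤ S := Finset.sum_le_sum_of_subset_of_nonneg hsubset (fun i hi _ => term_nonneg i hi)
  have hsum : K * (ε*L) ≤ ∑ i ∈ Icc 1 m, K * (i:ℝ)⁻¹ := by
    rw [← Finset.mul_sum]
    apply mul_le_mul_of_nonneg_left _ hK0
    have h6 : ε*L ≤ Real.log (m+1) := by
      rw [← Real.log_exp (ε*L)]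
      exact Real.log_le_log (Real.exp_pos _)
        (le_of_lt (by push_cast; exact Nat.lt_floor_add_one _))
    calc ε*L ≤ Real.log (m+1) := h6
      _ ≤ ∑ i ∈ Icc 1 m, (i:ℝ)⁻¹ := harm_lower m
  have hS2 : Real.exp (-2) * (L^(1+q)/y) ≤ S := by
    have hexpd : Real.exp (-1) ≤ Real.exp (-(δ*(ε*L))) := by
      apply Real.exp_le_exp.mpr
      have hd : δ*(ε*L) = (δ*L)/y := by rw [hεdef]; ring
      rw [hd]
      have : (δ*L)/y ≤ 1 := by rw [div_le_one hy0]; linarith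
      linarith
    have hL1q : L^(1+q) = L * L^q := by
      rw [Real.rpow_add hL0, Real.rpow_one]
    have hc : Real.exp (-2) * (L^(1+q)/y) ≤ K * (ε*L) := by
      rw [hKdef, hL1q, hεdef]
      have e2 : Real.exp (-2) = Real.exp (-1) * Real.exp (-1) := by
        rw [← Real.exp_add]; norm_num
      rw [e2]
      have expand : Real.exp (-(δ*(ε*L))) * (Real.exp (-1) * L^q) * (1/y*L)
          = (Real.exp (-(δ*(ε*L))) * Real.exp (-1)) * (L^q * L / y) := by ring
      have expand2 : Real.exp (-1) * Real.exp (-1) * (L*L^q/y)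
          = (Real.exp (-1) * Real.exp (-1)) * (L^q * L / y) := by ring
      rw [expand, expand2]
      exact mul_le_mul_of_nonneg_right
        (mul_le_mul_of_nonneg_right hexpd (Real.exp_pos _).le) (by positivity)
    linarith
  -- combine
  have hA0 : 0 ≤ L^(1+q)/y := by positivity
  have hS0 : 0 ≤ S := le_trans hLq hS1
  have e4 : Real.exp (-4) = Real.exp (-2) * Real.exp (-2) := by
    rw [← Real.exp_add]; norm_num
  have t1 : Real.exp (-4) * (L^(1+q)/y) ≤ (1/3) * S := by
    rw [e4, mul_assoc]
    calc Real.exp (-2) * (Real.exp (-2) * (L^(1+q)/y)) ≤ (1/3) * (Real.exp (-2) * (L^(1+q)/y)) := by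
          apply mul_le_mul_of_nonneg_right exp_neg_two_le (by positivity)
      _ ≤ (1/3) * S := by
          apply mul_le_mul_of_nonneg_left hS2 (by norm_num)
  have t2 : Real.exp (-4) * L^q ≤ (1/3) * S := by
    have he : Real.exp (-4) ≤ 1/3 := by
      rw [e4]
      nlinarith [Real.exp_pos (-2), exp_neg_two_le]
    calc Real.exp (-4) * L^q ≤ (1/3) * L^q := mul_le_mul_of_nonneg_right he hLq
      _ ≤ (1/3) * S := mul_le_mul_of_nonneg_left hS1 (by norm_num)
  calc Real.exp (-4) * (L^(1+q)/y + L^q)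
      = Real.exp (-4) * (L^(1+q)/y) + Real.exp (-4) * L^q := by ring
    _ ≤ (1/3)*S + (1/3)*S := add_le_add t1 t2
    _ ≤ S := by linarith

lemma partD {a q : ℝ} {n : ℕ} (ha : 1 ≤ a) (hq : 0 ≤ q) (hn : 2 ≤ n) :
    ∑ i ∈ Icc 1 n, (i:ℝ)^(-a) * Real.log ((n:ℝ)/i) ^ q ≤
      Real.exp 4 * Real.log n ^ (1+q) / ((a-1)*Real.log n + 1 + q) + Real.log n ^ q := by
  have hn1 : (1:ℝ) < n := by exact_mod_cast (by omega : 1 < n)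
  have hn0 : (0:ℝ) < n := by linarith
  set L : ℝ := Real.log n with hLdef
  have hL0 : 0 < L := Real.log_pos hn1
  set δ : ℝ := a - 1 with hδdef
  have hδ0 : 0 ≤ δ := by simp [hδdef]; linarith
  set y : ℝ := δ*L + 1 + q with hydef
  have hδL : 0 ≤ δ*L := mul_nonneg hδ0 hL0.le
  have hy0 : 0 < y := by simp [hydef]; linarith
  set δ' : ℝ := δ + q/L with hδ'def
  have hδ'0 : 0 ≤ δ' := by rw [hδ'def]; positivity
  have hδ'L : δ'*L = δ*L + q := by rw [hδ'def]; field_simp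
  have hyy : y = δ'*L + 1 := by rw [hδ'L, hydef]; ring
  have hLq : (0:ℝ) ≤ L^q := Real.rpow_nonneg hL0.le _
  -- split off i = 1
  have hsplit : Icc 1 n = insert 1 (Icc 2 n) := by
    ext z; simp [Finset.mem_Icc, Finset.mem_insert]; omega
  rw [hsplit, Finset.sum_insert (by simp)]
  have hone : ((1:ℕ):ℝ)^(-a) * Real.log ((n:ℝ)/(1:ℕ)) ^ q = L^q := by
    simp [hLdef]
  rw [hone]
  -- pointwise bound on Icc 2 n
  have key : ∀ i ∈ Icc 2 n, (i:ℝ)^(-a) * Real.log ((n:ℝ)/i) ^ q ≤ L^q * (i:ℝ)^(-(1+δ')) := by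
    intro i hi
    rw [Finset.mem_Icc] at hi
    have hi1 : (1:ℝ) ≤ i := by exact_mod_cast (by omega : 1 ≤ i)
    have hi0 : (0:ℝ) < i := by linarith
    have hlogi0 : 0 ≤ Real.log i := Real.log_nonneg hi1
    have hlogiL : Real.log i ≤ L := Real.log_le_log hi0 (by exact_mod_cast hi.2)
    have hw : Real.log ((n:ℝ)/i) = L - Real.log i := Real.log_div (ne_of_gt hn0) (ne_of_gt hi0)
    have hw0 : 0 ≤ L - Real.log i := by linarith
    have h1 : (L - Real.log i)^q ≤ L^q * Real.exp (q*((L - Real.log i)/L - 1)) :=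
      rpow_le_exp_bound hq hL0 hw0
    have h2 : q*((L - Real.log i)/L - 1) = Real.log i * (-(q/L)) := by
      field_simp
      try ring_nf
      try tauto
    have h3 : Real.exp (Real.log i * (-(q/L))) = (i:ℝ)^(-(q/L)) :=
      (Real.rpow_def_of_pos hi0 _).symm
    have h4 : (L - Real.log i)^q ≤ L^q * (i:ℝ)^(-(q/L)) := by
      rw [← h3, ← h2]; exact h1
    calc (i:ℝ)^(-a) * Real.log ((n:ℝ)/i) ^ q
        = (i:ℝ)^(-a) * (L - Real.log i)^q := by rw [hw]
      _ ≤ (i:ℝ)^(-a) * (L^q * (i:ℝ)^(-(q/L))) :=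
          mul_le_mul_of_nonneg_left h4 (Real.rpow_nonneg hi0.le _)
      _ = L^q * ((i:ℝ)^(-a) * (i:ℝ)^(-(q/L))) := by ring
      _ = L^q * (i:ℝ)^(-(1+δ')) := by
          rw [← Real.rpow_add hi0]
          congr 2
          rw [hδ'def, hδdef]; ring
  -- sum bound
  set B : ℝ := ∑ i ∈ Icc 2 n, (i:ℝ)^(-(1+δ')) with hBdef
  have hB1 : B ≤ L := by
    rw [hBdef]
    calc ∑ i ∈ Icc 2 n, (i:ℝ)^(-(1+δ')) ≤ ∑ i ∈ Icc 2 n, (i:ℝ)⁻¹ := by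
          apply Finset.sum_le_sum
          intro i hi
          rw [Finset.mem_Icc] at hi
          have hi1 : (1:ℝ) ≤ i := by exact_mod_cast (by omega : 1 ≤ i)
          calc (i:ℝ)^(-(1+δ')) ≤ (i:ℝ)^(-1 : ℝ) :=
                Real.rpow_le_rpow_of_exponent_le hi1 (by linarith)
            _ = (i:ℝ)⁻¹ := Real.rpow_neg_one _
      _ ≤ Real.log n := harm_upper n
  have hB2 : δ' * B ≤ 1 := by
    have := tel_upper2 hδ'0 n (by omega)
    have h5 : (0:ℝ) ≤ (n:ℝ)^(-δ') := Real.rpow_nonneg hn0.le _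
    rw [hBdef]; linarith
  have hB0 : 0 ≤ B := by
    rw [hBdef]
    apply Finset.sum_nonneg
    intro i hi
    rw [Finset.mem_Icc] at hi
    have : (0:ℝ) ≤ i := by positivity
    exact Real.rpow_nonneg this _
  have hB : B ≤ 2*L/y := by
    rcases le_or_gt (δ'*L) 1 with hc | hc
    · have hy2 : y ≤ 2 := by rw [hyy]; linarith
      rw [le_div_iff₀ hy0]
      nlinarith
    · have hd0 : 0 < δ' := by
        rcases eq_or_lt_of_le hδ'0 with h | h
        · exfalso; rw [← h] at hc; simp at hc; linarith
        · exact h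
      have hBd : B ≤ 1/δ' := by rw [le_div_iff₀ hd0]; linarith [hB2]
      calc B ≤ 1/δ' := hBd
        _ ≤ 2*L/y := by
            rw [div_le_div_iff₀ hd0 hy0, hyy]
            nlinarith
  -- final
  have hsum2 : ∑ i ∈ Icc 2 n, (i:ℝ)^(-a) * Real.log ((n:ℝ)/i) ^ q ≤ L^q * B := by
    rw [hBdef, Finset.mul_sum]
    exact Finset.sum_le_sum key
  have hfin : L^q * B ≤ Real.exp 4 * L^(1+q) / y := by
    have h5 : (2:ℝ) ≤ Real.exp 4 := by nlinarith [Real.add_one_le_exp 4]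
    have hL1q : L^(1+q) = L * L^q := by rw [Real.rpow_add hL0, Real.rpow_one]
    calc L^q * B ≤ L^q * (2*L/y) := mul_le_mul_of_nonneg_left hB hLq
      _ = 2 * (L * L^q) / y := by ring
      _ ≤ Real.exp 4 * (L * L^q) / y := by gcongr
      _ = Real.exp 4 * L^(1+q) / y := by rw [hL1q]
  linarith [hsum2, hfin]

end LorentzHelpers

/-- There exist universal constants `C ≥ c > 0` such that for all `a, q ∈ [0,∞)` and all
integers `n ≥ 2`: if `a ∈ [0,1]` then the sum `∑_{i=1}^n i^{-a} (ln (n/i))^q` is bounded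
above and below by `C^{1+q}` resp. `c^{1+q}` times
`n^{1-a} (1+q)^{1+q} (ln n)^{1+q} / ((1-a) ln n + 1 + q)^{1+q}`, and if `a ∈ [1,∞)` the sum
is bounded above by `C (ln n)^{1+q}/((a-1) ln n + 1 + q) + (ln n)^q` and below by
`c [(ln n)^{1+q}/((a-1) ln n + 1 + q) + (ln n)^q]`.
(Real powers are `Real.rpow`, so `(ln (n/n))^0 = 0^0 = 1` as in the convention.) -/
theorem lorentz_basic_sum_bound :
    ∃ C c : ℝ, 0 < c ∧ c ≤ C ∧
      ∀ (a q : ℝ) (n : ℕ), 0 ≤ a → 0 ≤ q → 2 ≤ n →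
        (a ≤ 1 →
          c ^ (1 + q) * (n : ℝ) ^ (1 - a) * (1 + q) ^ (1 + q) * Real.log n ^ (1 + q) /
              ((1 - a) * Real.log n + 1 + q) ^ (1 + q) ≤
            (∑ i ∈ Finset.Icc 1 n, (i : ℝ) ^ (-a) * Real.log ((n : ℝ) / i) ^ q) ∧
          (∑ i ∈ Finset.Icc 1 n, (i : ℝ) ^ (-a) * Real.log ((n : ℝ) / i) ^ q) ≤
            C ^ (1 + q) * (n : ℝ) ^ (1 - a) * (1 + q) ^ (1 + q) * Real.log n ^ (1 + q) /
              ((1 - a) * Real.log n + 1 + q) ^ (1 + q)) ∧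
        (1 ≤ a →
          c * (Real.log n ^ (1 + q) / ((a - 1) * Real.log n + 1 + q) + Real.log n ^ q) ≤
            (∑ i ∈ Finset.Icc 1 n, (i : ℝ) ^ (-a) * Real.log ((n : ℝ) / i) ^ q) ∧
          (∑ i ∈ Finset.Icc 1 n, (i : ℝ) ^ (-a) * Real.log ((n : ℝ) / i) ^ q) ≤
            C * Real.log n ^ (1 + q) / ((a - 1) * Real.log n + 1 + q) + Real.log n ^ q) := by
  refine ⟨Real.exp 4, Real.exp (-4), Real.exp_pos _, Real.exp_le_exp.mpr (by norm_num), ?_⟩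
  intro a q n ha hq hn
  exact ⟨fun ha1 => ⟨partA ha ha1 hq hn, partB ha ha1 hq hn⟩,
    fun ha1 => ⟨partC ha1 hq hn, partD ha1 hq hn⟩⟩
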